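/- Fix integers N ≥ 3 and M ≥ 3 and real coefficients f^c_{n,m}, f^s_{n,m}. Let F : ℝ × ℝ → ℝ be the partial-regularity DFS expansion, F(φ,θ) = Σ_{m=0}^{M} f_m^{c,N}(θ) cos(mφ) + Σ_{m=1}^{M} f_m^{s,N}(θ) sin(mφ), where f_0^{c,N}(θ) = Σ_{n=0}^{N} f^c_{n,0} cos(nθ); f_1^{c(s),N}(θ) = Σ_{n=0}^{N−1} f^{c(s)}_{n,1} sin(θ) cos(nθ); for even m ≥ 2, f_m^{c(s),N}(θ) = Σ_{n=1}^{N−1} f^{c(s)}_{n,m} sin(θ) sin(nθ); and for odd m ≥ 3, f_m^{c(s),N}(θ) = Σ_{n=1}^{N−2} f^{c(s)}_{n,m} sin²(θ) sin(nθ). Set C := Σ_{n=0}^{N−1} f^c_{n,1} and S := Σ_{n=0}^{N−1} f^s_{n,1}. Then for every φ ∈ ℝ, the partial derivative of F with respect to θ at θ = 0 satisfies ∂F/∂θ (φ, 0) = C·cos(φ) + S·sin(φ). -/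

import Mathlib

open scoped BigOperators Real

noncomputable section

/-- The latitudinal component `f_m^{N}(θ)` of the partial-regularity DFS expansion,
built from coefficients `f n m`. -/
def dfsLat (N : ℕ) (f : ℕ → ℕ → ℝ) (m : ℕ) (θ : ℝ) : ℝ :=
  if m = 0 then ∑ n ∈ Finset.range (N + 1), f n 0 * Real.cos ((n : ℝ) * θ)
  else if m = 1 then ∑ n ∈ Finset.range N, f n 1 * (Real.sin θ * Real.cos ((n : ℝ) * θ))
  else if m % 2 = 0 then
    ∑ n ∈ Finset.Icc 1 (N - 1), f n m * (Real.sin θ * Real.sin ((n : ℝ) * θ))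
  else ∑ n ∈ Finset.Icc 1 (N - 2), f n m * (Real.sin θ ^ 2 * Real.sin ((n : ℝ) * θ))

/-- The partial-regularity DFS expansion
`F(φ,θ) = Σ_{m=0}^{M} f_m^{c,N}(θ) cos(mφ) + Σ_{m=1}^{M} f_m^{s,N}(θ) sin(mφ)`. -/
def dfsF (N M : ℕ) (fc fs : ℕ → ℕ → ℝ) (φ θ : ℝ) : ℝ :=
  ∑ m ∈ Finset.range (M + 1), dfsLat N fc m θ * Real.cos ((m : ℝ) * φ) +
    ∑ m ∈ Finset.Icc 1 M, dfsLat N fs m θ * Real.sin ((m : ℝ) * φ)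

end


private lemma hasDerivAt_cos_mul (c x : ℝ) :
    HasDerivAt (fun θ : ℝ => Real.cos (c * θ)) (-Real.sin (c * x) * c) x := by
  have h := (Real.hasDerivAt_cos (c * x)).comp x ((hasDerivAt_id x).const_mul c)
  simpa [Function.comp_def] using h

private lemma hasDerivAt_sin_mul (c x : ℝ) :
    HasDerivAt (fun θ : ℝ => Real.sin (c * θ)) (Real.cos (c * x) * c) x := by
  have h := (Real.hasDerivAt_sin (c * x)).comp x ((hasDerivAt_id x).const_mul c)
  simpa [Function.comp_def] using h

private lemma hasDerivAt_dfsLat (N : ℕ) (f : ℕ → ℕ → ℝ) (m : ℕ) :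
    HasDerivAt (fun θ => dfsLat N f m θ)
      (if m = 1 then ∑ n ∈ Finset.range N, f n 1 else 0) 0 := by
  unfold dfsLat
  rcases Nat.eq_zero_or_pos m with hm0 | hm0
  · subst hm0
    simp only [if_pos rfl, if_neg (by norm_num : (0:ℕ) ≠ 1)]
    have : HasDerivAt (fun θ => ∑ n ∈ Finset.range (N + 1), f n 0 * Real.cos ((n : ℝ) * θ))
        (∑ n ∈ Finset.range (N + 1), f n 0 * (-Real.sin ((n : ℝ) * 0) * n)) 0 :=
      HasDerivAt.fun_sum fun n _ => (hasDerivAt_cos_mul n 0).const_mul (f n 0)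
    simpa using this
  rcases eq_or_ne m 1 with hm1 | hm1
  · subst hm1
    simp only [if_neg (by norm_num : (1:ℕ) ≠ 0), if_pos rfl]
    have : HasDerivAt
        (fun θ => ∑ n ∈ Finset.range N, f n 1 * (Real.sin θ * Real.cos ((n : ℝ) * θ)))
        (∑ n ∈ Finset.range N, f n 1 *
          (Real.cos 0 * Real.cos ((n : ℝ) * 0) + Real.sin 0 * (-Real.sin ((n : ℝ) * 0) * n))) 0 :=
      HasDerivAt.fun_sum fun n _ =>
        (((Real.hasDerivAt_sin 0).mul (hasDerivAt_cos_mul n 0)).const_mul (f n 1))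
    simpa using this
  simp only [if_neg hm0.ne', if_neg hm1]
  rcases Nat.even_or_odd m with he | ho
  · have he' : m % 2 = 0 := Nat.even_iff.mp he
    simp only [he', reduceIte]
    have : HasDerivAt
        (fun θ => ∑ n ∈ Finset.Icc 1 (N-1), f n m * (Real.sin θ * Real.sin ((n : ℝ) * θ)))
        (∑ n ∈ Finset.Icc 1 (N-1), f n m *
          (Real.cos 0 * Real.sin ((n : ℝ) * 0) + Real.sin 0 * (Real.cos ((n : ℝ) * 0) * n))) 0 :=
      HasDerivAt.fun_sum fun n _ =>
        (((Real.hasDerivAt_sin 0).mul (hasDerivAt_sin_mul n 0)).const_mul (f n m))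
    simpa using this
  · have ho' : m % 2 = 1 := Nat.odd_iff.mp ho
    simp only [ho', reduceIte]
    have hs : HasDerivAt (fun θ : ℝ => Real.sin θ ^ 2) (2 * Real.sin 0 ^ 1 * Real.cos 0) 0 :=
      (Real.hasDerivAt_sin 0).pow 2
    have : HasDerivAt
        (fun θ => ∑ n ∈ Finset.Icc 1 (N-2), f n m * (Real.sin θ ^ 2 * Real.sin ((n : ℝ) * θ)))
        (∑ n ∈ Finset.Icc 1 (N-2), f n m *
          ((2 * Real.sin 0 ^ 1 * Real.cos 0) * Real.sin ((n : ℝ) * 0) +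
            Real.sin 0 ^ 2 * (Real.cos ((n : ℝ) * 0) * n))) 0 :=
      HasDerivAt.fun_sum fun n _ => ((hs.mul (hasDerivAt_sin_mul n 0)).const_mul (f n m))
    simpa using this

/-- The meridional derivative of the partial-regularity DFS expansion at the pole
`θ = 0` has only a first azimuthal wavenumber component:
`∂F/∂θ(φ, 0) = C·cos φ + S·sin φ` with `C = Σ fc n 1` and `S = Σ fs n 1`. -/
theorem dfsF_meridional_deriv_at_pole
    (N M : ℕ) (hN : 3 ≤ N) (hM : 3 ≤ M) (fc fs : ℕ → ℕ → ℝ) :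
    ∀ φ : ℝ,
      deriv (fun θ => dfsF N M fc fs φ θ) 0 =
        (∑ n ∈ Finset.range N, fc n 1) * Real.cos φ +
          (∑ n ∈ Finset.range N, fs n 1) * Real.sin φ := by
  intro φ
  have h : HasDerivAt (fun θ => dfsF N M fc fs φ θ)
      ((∑ m ∈ Finset.range (M + 1),
          (if m = 1 then ∑ n ∈ Finset.range N, fc n 1 else 0) * Real.cos ((m : ℝ) * φ)) +
        ∑ m ∈ Finset.Icc 1 M,
          (if m = 1 then ∑ n ∈ Finset.range N, fs n 1 else 0) * Real.sin ((m : ℝ) * φ)) 0 := by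
    unfold dfsF
    exact (HasDerivAt.fun_sum fun m _ =>
        (hasDerivAt_dfsLat N fc m).mul_const (Real.cos ((m : ℝ) * φ))).add
      (HasDerivAt.fun_sum fun m _ =>
        (hasDerivAt_dfsLat N fs m).mul_const (Real.sin ((m : ℝ) * φ)))
  rw [h.deriv]
  have h1 : (1:ℕ) ∈ Finset.range (M + 1) := Finset.mem_range.mpr (by omega)
  have h2 : (1:ℕ) ∈ Finset.Icc 1 M := Finset.mem_Icc.mpr ⟨le_refl 1, by omega⟩
  simp only [ite_mul, zero_mul, Finset.sum_ite_eq' _ 1, h1, h2, if_true, Nat.cast_one, one_mul]
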